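/- For all integers n ≥ 1 and h ≥ 0 with h ≡ n (mod 2), the number V(n,h) of ±1-paths of length n with |S_k| ≤ h for all k and |S_n| = h satisfies V(n,h) = 2 Σ_{k ≥ 0, (h+1)(2k+1) ≤ n+1} (−1)^k · ((h+1)(2k+1)/(n+1)) · C(n+1, (n+1−(h+1)(2k+1))/2), an identity of rational numbers (the binomial arguments are non-negative integers by the parity assumption). Equivalently, with n = 2m−1 and τ_{h,k} = (h+1)(2k+1)/2, the probability p_{2m−1}^{(h)} equals (4/4^m) Σ_{k≥0} (−1)^k (τ_{h,k}/m) C(2m, m−τ_{h,k}) whenever h+1 ≡ 2m (mod 2). -/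

import Mathlib

/-- Partial sum `S_k` of the `±1`-walk encoded by `ε : Fin n → Bool`
(`true` = step `+1`, `false` = step `-1`). -/
def walkSum (n : ℕ) (ε : Fin n → Bool) (k : ℕ) : ℤ :=
  ∑ i : Fin n, if (i : ℕ) < k then (if ε i then 1 else -1) else 0

/-- `V n h`: number of `±1`-paths of length `n` with `|S_k| ≤ h` for all `k` and `|S_n| = h`. -/
noncomputable def V (n h : ℕ) : ℕ :=
  Nat.card {ε : Fin n → Bool //
    (∀ k ≤ n, |walkSum n ε k| ≤ (h : ℤ)) ∧ |walkSum n ε n| = (h : ℤ)}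


/-- Unconstrained walk count: `b n x` = number of `±1`-paths of length `n` from `0` to `x`. -/
def b : ℕ → ℤ → ℤ
  | 0, x => if x = 0 then 1 else 0
  | (n+1), x => b n (x - 1) + b n (x + 1)

lemma b_zero : ∀ (n : ℕ) (x : ℤ), (n : ℤ) < |x| → b n x = 0 := by
  intro n
  induction n with
  | zero =>
    intro x hx
    have : x ≠ 0 := by
      intro h; rw [h] at hx; simp at hx
    simp [b, this]
  | succ n ih =>
    intro x hx
    have h1 : (n : ℤ) < |x - 1| := by
      have := abs_sub_abs_le_abs_sub x 1
      simp only [abs_one] at this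
      push_cast at hx ⊢; linarith
    have h2 : (n : ℤ) < |x + 1| := by
      have := abs_sub_abs_le_abs_sub x (-1)
      simp only [abs_neg, abs_one, sub_neg_eq_add] at this
      push_cast at hx ⊢; linarith
    simp [b, ih _ h1, ih _ h2]

lemma b_symm : ∀ (n : ℕ) (x : ℤ), b n (-x) = b n x := by
  intro n
  induction n with
  | zero => intro x; simp [b, neg_eq_zero]
  | succ n ih =>
    intro x
    have e1 : -x - 1 = -(x + 1) := by ring
    have e2 : -x + 1 = -(x - 1) := by ring
    simp only [b, e1, e2, ih]
    ring

lemma b_closed : ∀ (n k : ℕ), k ≤ n → b n ((n : ℤ) - 2 * k) = n.choose k := by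
  intro n
  induction n with
  | zero =>
    intro k hk
    interval_cases k
    simp [b]
  | succ n ih =>
    intro k hk
    show b n ((n + 1 : ℤ) - 2 * k - 1) + b n ((n + 1 : ℤ) - 2 * k + 1) = _
    rcases Nat.eq_zero_or_pos k with rfl | hk0
    · have e1 : (n + 1 : ℤ) - 2 * (0 : ℕ) - 1 = (n : ℤ) - 2 * (0 : ℕ) := by push_cast; ring
      have e2 : (n + 1 : ℤ) - 2 * (0 : ℕ) + 1 = (n : ℤ) + 2 := by push_cast; ring
      rw [e1, e2, ih 0 (Nat.zero_le n), b_zero n ((n : ℤ) + 2) (by rw [abs_of_nonneg (by positivity)]; linarith)]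
      simp
    · rcases Nat.lt_or_ge k (n + 1) with hk1 | hk1
      · -- 1 ≤ k ≤ n
        obtain ⟨j, rfl⟩ : ∃ j, k = j + 1 := ⟨k - 1, by omega⟩
        have hkn : j + 1 ≤ n := by omega
        have e1 : (n + 1 : ℤ) - 2 * (j + 1 : ℕ) - 1 = (n : ℤ) - 2 * (j + 1 : ℕ) := by push_cast; ring
        have e2 : (n + 1 : ℤ) - 2 * (j + 1 : ℕ) + 1 = (n : ℤ) - 2 * (j : ℕ) := by push_cast; ring
        rw [e1, e2, ih (j + 1) hkn, ih j (by omega), Nat.choose_succ_succ]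
        push_cast; ring
      · -- k = n + 1
        have hk' : k = n + 1 := by omega
        subst hk'
        have e1 : (n + 1 : ℤ) - 2 * (n + 1 : ℕ) - 1 = -((n : ℤ) + 2) := by push_cast; ring
        have e2 : (n + 1 : ℤ) - 2 * (n + 1 : ℕ) + 1 = (n : ℤ) - 2 * (n : ℕ) := by push_cast; ring
        rw [e1, e2, b_symm, b_zero n ((n : ℤ) + 2) (by rw [abs_of_nonneg (by positivity)]; linarith),
          ih n le_rfl]
        simp [Nat.choose_self]

/-- Reflection-principle candidate count for the strip `[-hb, hb]`, paths `0 → a`. -/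
def fref (hb n : ℕ) (a : ℤ) : ℤ :=
  ∑ i ∈ Finset.range (2 * n + 1),
    (b n (a + 4 * ((hb : ℤ) + 1) * ((i : ℤ) - n)) -
      b n (2 * ((hb : ℤ) + 1) - a + 4 * ((hb : ℤ) + 1) * ((i : ℤ) - n)))

lemma fref_boundary_pos (hb n : ℕ) : fref hb n ((hb : ℤ) + 1) = 0 := by
  apply Finset.sum_eq_zero
  intro i _
  have : 2 * ((hb : ℤ) + 1) - ((hb : ℤ) + 1) + 4 * ((hb : ℤ) + 1) * ((i : ℤ) - n)
      = (hb : ℤ) + 1 + 4 * ((hb : ℤ) + 1) * ((i : ℤ) - n) := by ring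
  rw [this, sub_self]

lemma fref_boundary_neg (hb n : ℕ) : fref hb n (-((hb : ℤ) + 1)) = 0 := by
  have hn0 : (0 : ℤ) ≤ (n : ℤ) := Nat.cast_nonneg n
  have hh0 : (0 : ℤ) ≤ (hb : ℤ) := Nat.cast_nonneg hb
  have tel := Finset.sum_range_sub'
    (fun i : ℕ => b n (-((hb : ℤ) + 1) + 4 * ((hb : ℤ) + 1) * ((i : ℤ) - n))) (2 * n + 1)
  unfold fref
  have step : ∀ i ∈ Finset.range (2 * n + 1),
      (b n (-((hb : ℤ) + 1) + 4 * ((hb : ℤ) + 1) * ((i : ℤ) - n)) -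
        b n (2 * ((hb : ℤ) + 1) - -((hb : ℤ) + 1) + 4 * ((hb : ℤ) + 1) * ((i : ℤ) - n)))
      = ((fun i : ℕ => b n (-((hb : ℤ) + 1) + 4 * ((hb : ℤ) + 1) * ((i : ℤ) - n))) i
        - (fun i : ℕ => b n (-((hb : ℤ) + 1) + 4 * ((hb : ℤ) + 1) * ((i : ℤ) - n))) (i + 1)) := by
    intro i _
    have e1 : -((hb : ℤ) + 1) + 4 * ((hb : ℤ) + 1) * (((i + 1 : ℕ) : ℤ) - n)
        = 2 * ((hb : ℤ) + 1) - -((hb : ℤ) + 1) + 4 * ((hb : ℤ) + 1) * ((i : ℤ) - n) := by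
      push_cast; ring
    simp only [e1]
  rw [Finset.sum_congr rfl step, tel]
  have z1 : b n (-((hb : ℤ) + 1) + 4 * ((hb : ℤ) + 1) * (((0 : ℕ) : ℤ) - n)) = 0 := by
    apply b_zero
    rw [abs_of_nonpos (by push_cast; nlinarith [mul_nonneg hh0 hn0])]
    push_cast; nlinarith [mul_nonneg hh0 hn0]
  have z2 : b n (-((hb : ℤ) + 1) + 4 * ((hb : ℤ) + 1) * (((2 * n + 1 : ℕ) : ℤ) - n)) = 0 := by
    apply b_zero
    rw [abs_of_nonneg (by push_cast; nlinarith [mul_nonneg hh0 hn0])]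
    push_cast; nlinarith [mul_nonneg hh0 hn0]
  rw [z1, z2, sub_self]

lemma fref_pascal (hb n : ℕ) (a : ℤ) (ha : |a| ≤ (hb : ℤ)) :
    fref hb (n + 1) a = fref hb n (a - 1) + fref hb n (a + 1) := by
  have hn0 : (0 : ℤ) ≤ (n : ℤ) := Nat.cast_nonneg n
  have hh0 : (0 : ℤ) ≤ (hb : ℤ) := Nat.cast_nonneg hb
  have ha1 : -(hb : ℤ) ≤ a := (abs_le.mp ha).1
  have ha2 : a ≤ (hb : ℤ) := (abs_le.mp ha).2
  have hrange : 2 * (n + 1) + 1 = (2 * n + 1) + 1 + 1 := by ring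
  unfold fref
  rw [hrange, Finset.sum_range_succ, Finset.sum_range_succ']
  have z1 : b (n + 1) (a + 4 * ((hb : ℤ) + 1) * (((0 : ℕ) : ℤ) - (n + 1 : ℕ))) = 0 := by
    apply b_zero
    rw [abs_of_nonpos (by push_cast; nlinarith [mul_nonneg hh0 hn0])]
    push_cast; nlinarith [mul_nonneg hh0 hn0]
  have z2 : b (n + 1) (2 * ((hb : ℤ) + 1) - a + 4 * ((hb : ℤ) + 1) * (((0 : ℕ) : ℤ) - (n + 1 : ℕ))) = 0 := by
    apply b_zero
    rw [abs_of_nonpos (by push_cast; nlinarith [mul_nonneg hh0 hn0])]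
    push_cast; nlinarith [mul_nonneg hh0 hn0]
  have z3 : b (n + 1) (a + 4 * ((hb : ℤ) + 1) * ((((2 * n + 1) + 1 : ℕ) : ℤ) - (n + 1 : ℕ))) = 0 := by
    apply b_zero
    rw [abs_of_nonneg (by push_cast; nlinarith [mul_nonneg hh0 hn0])]
    push_cast; nlinarith [mul_nonneg hh0 hn0]
  have z4 : b (n + 1) (2 * ((hb : ℤ) + 1) - a + 4 * ((hb : ℤ) + 1) * ((((2 * n + 1) + 1 : ℕ) : ℤ) - (n + 1 : ℕ))) = 0 := by
    apply b_zero
    rw [abs_of_nonneg (by push_cast; nlinarith [mul_nonneg hh0 hn0])]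
    push_cast; nlinarith [mul_nonneg hh0 hn0]
  rw [z1, z2, z3, z4]
  have main : ∀ i ∈ Finset.range (2 * n + 1),
      (b (n + 1) (a + 4 * ((hb : ℤ) + 1) * (((i + 1 : ℕ) : ℤ) - (n + 1 : ℕ))) -
        b (n + 1) (2 * ((hb : ℤ) + 1) - a + 4 * ((hb : ℤ) + 1) * (((i + 1 : ℕ) : ℤ) - (n + 1 : ℕ))))
      = (b n (a - 1 + 4 * ((hb : ℤ) + 1) * ((i : ℤ) - n)) -
          b n (2 * ((hb : ℤ) + 1) - (a - 1) + 4 * ((hb : ℤ) + 1) * ((i : ℤ) - n)))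
        + (b n (a + 1 + 4 * ((hb : ℤ) + 1) * ((i : ℤ) - n)) -
          b n (2 * ((hb : ℤ) + 1) - (a + 1) + 4 * ((hb : ℤ) + 1) * ((i : ℤ) - n))) := by
    intro i _
    have eb : ∀ x : ℤ, b (n + 1) x = b n (x - 1) + b n (x + 1) := fun x => rfl
    rw [eb, eb]
    have e1 : a + 4 * ((hb : ℤ) + 1) * (((i + 1 : ℕ) : ℤ) - (n + 1 : ℕ)) - 1
        = a - 1 + 4 * ((hb : ℤ) + 1) * ((i : ℤ) - n) := by push_cast; ring
    have e2 : a + 4 * ((hb : ℤ) + 1) * (((i + 1 : ℕ) : ℤ) - (n + 1 : ℕ)) + 1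
        = a + 1 + 4 * ((hb : ℤ) + 1) * ((i : ℤ) - n) := by push_cast; ring
    have e3 : 2 * ((hb : ℤ) + 1) - a + 4 * ((hb : ℤ) + 1) * (((i + 1 : ℕ) : ℤ) - (n + 1 : ℕ)) - 1
        = 2 * ((hb : ℤ) + 1) - (a + 1) + 4 * ((hb : ℤ) + 1) * ((i : ℤ) - n) := by push_cast; ring
    have e4 : 2 * ((hb : ℤ) + 1) - a + 4 * ((hb : ℤ) + 1) * (((i + 1 : ℕ) : ℤ) - (n + 1 : ℕ)) + 1
        = 2 * ((hb : ℤ) + 1) - (a - 1) + 4 * ((hb : ℤ) + 1) * ((i : ℤ) - n) := by push_cast; ring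
    rw [e1, e2, e3, e4]
    ring
  rw [Finset.sum_congr rfl main, Finset.sum_add_distrib]
  ring

lemma fref_zero (hb : ℕ) (a : ℤ) (ha : |a| ≤ (hb : ℤ)) :
    fref hb 0 a = if a = 0 then 1 else 0 := by
  have ha2 : a ≤ (hb : ℤ) := (abs_le.mp ha).2
  have hne : 2 * ((hb : ℤ) + 1) - a + 4 * ((hb : ℤ) + 1) * (((0 : ℕ) : ℤ) - (0 : ℕ)) ≠ 0 := by
    push_cast; intro h; linarith
  unfold fref
  rw [Finset.sum_range_one]
  show b 0 (a + 4 * ((hb : ℤ) + 1) * (((0:ℕ) : ℤ) - (0:ℕ))) - b 0 _ = _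
  rw [show (b 0 = fun x : ℤ => if x = 0 then 1 else 0) from rfl]
  simp only []
  rw [if_neg hne]
  push_cast
  simp

lemma walkSum_zero' (n : ℕ) (ε : Fin n → Bool) : walkSum n ε 0 = 0 := by
  simp [walkSum]

lemma walkSum_succ_of_lt {n k : ℕ} (hk : k < n) (ε : Fin n → Bool) :
    walkSum n ε (k + 1) = walkSum n ε k + (if ε ⟨k, hk⟩ then 1 else -1) := by
  unfold walkSum
  have e : ∀ i : Fin n, (if (i : ℕ) < k + 1 then (if ε i then (1:ℤ) else -1) else 0)
      = (if (i : ℕ) < k then (if ε i then (1:ℤ) else -1) else 0)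
        + (if i = ⟨k, hk⟩ then (if ε i then (1:ℤ) else -1) else 0) := by
    intro i
    by_cases h1 : (i : ℕ) < k
    · have h2 : (i : ℕ) < k + 1 := by omega
      have h3 : i ≠ ⟨k, hk⟩ := by intro he; rw [he] at h1; simp at h1
      simp [h1, h2, h3]
    · by_cases h4 : (i : ℕ) = k
      · have h2 : (i : ℕ) < k + 1 := by omega
        have h3 : i = ⟨k, hk⟩ := Fin.ext h4
        simp [h1, h2, h3]
      · have h2 : ¬ ((i : ℕ) < k + 1) := by omega
        have h3 : i ≠ ⟨k, hk⟩ := by intro he; rw [he] at h4; simp at h4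
        simp [h1, h2, h3]
  rw [Finset.sum_congr rfl (fun i _ => e i), Finset.sum_add_distrib,
    Finset.sum_ite_eq' Finset.univ (⟨k, hk⟩ : Fin n)]
  simp

lemma walkSum_castSucc (n : ℕ) (ε : Fin (n + 1) → Bool) {k : ℕ} (hk : k ≤ n) :
    walkSum (n + 1) ε k = walkSum n (fun i => ε i.castSucc) k := by
  unfold walkSum
  rw [Fin.sum_univ_castSucc]
  simp only [Fin.coe_castSucc, Fin.val_last]
  rw [if_neg (by omega)]
  simp

lemma walkSum_snoc_last (n : ℕ) (ε : Fin (n + 1) → Bool) :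
    walkSum (n + 1) ε (n + 1)
      = walkSum n (fun i => ε i.castSucc) n + (if ε (Fin.last n) then 1 else -1) := by
  rw [walkSum_succ_of_lt (Nat.lt_succ_self n), walkSum_castSucc n ε le_rfl]
  rfl

/-- `Wc hb n a`: number of `±1`-paths of length `n` from `0` to `a` staying in `[-hb, hb]`. -/
noncomputable def Wc (hb n : ℕ) (a : ℤ) : ℕ :=
  Nat.card {ε : Fin n → Bool //
    (∀ k ≤ n, |walkSum n ε k| ≤ (hb : ℤ)) ∧ walkSum n ε n = a}

lemma Wc_out (hb n : ℕ) (a : ℤ) (ha : (hb : ℤ) < |a|) : Wc hb n a = 0 := by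
  have : IsEmpty {ε : Fin n → Bool //
      (∀ k ≤ n, |walkSum n ε k| ≤ (hb : ℤ)) ∧ walkSum n ε n = a} := by
    constructor
    rintro ⟨ε, h1, h2⟩
    have := h1 n le_rfl
    rw [h2] at this
    exact absurd this (not_le.mpr ha)
  exact Nat.card_of_isEmpty

/-- Split a cardinality over `Bool × σ`. -/
lemma card_bool_split {σ : Type*} [Finite σ] (P : Bool → σ → Prop) :
    Nat.card {p : Bool × σ // P p.1 p.2}
      = Nat.card {s : σ // P true s} + Nat.card {s : σ // P false s} := by
  rw [← Nat.card_sum]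
  apply Nat.card_congr
  exact {
    toFun := fun x => match x with
      | ⟨(true, s), h⟩ => Sum.inl ⟨s, h⟩
      | ⟨(false, s), h⟩ => Sum.inr ⟨s, h⟩
    invFun := fun x => match x with
      | Sum.inl ⟨s, h⟩ => ⟨(true, s), h⟩
      | Sum.inr ⟨s, h⟩ => ⟨(false, s), h⟩
    left_inv := fun x => by rcases x with ⟨⟨b, s⟩, h⟩; cases b <;> rfl
    right_inv := fun x => by rcases x with ⟨s, h⟩ | ⟨s, h⟩ <;> rfl }

/-- The last-step equivalence. -/
def snocEquiv (n : ℕ) : (Fin (n + 1) → Bool) ≃ Bool × (Fin n → Bool) where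
  toFun ε := (ε (Fin.last n), fun i => ε i.castSucc)
  invFun p := Fin.snoc p.2 p.1
  left_inv ε := by exact Fin.snoc_init_self ε
  right_inv p := by
    ext i
    · simp
    · simp

lemma Wc_succ (hb n : ℕ) (a : ℤ) (ha : |a| ≤ (hb : ℤ)) :
    Wc hb (n + 1) a = Wc hb n (a - 1) + Wc hb n (a + 1) := by
  have key : Wc hb (n + 1) a
      = Nat.card {p : Bool × (Fin n → Bool) //
          (∀ k ≤ n, |walkSum n p.2 k| ≤ (hb : ℤ))
            ∧ walkSum n p.2 n = a - (if p.1 then 1 else -1)} := by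
    apply Nat.card_congr
    apply Equiv.subtypeEquiv (snocEquiv n)
    intro ε
    show ((∀ k ≤ n + 1, |walkSum (n + 1) ε k| ≤ (hb : ℤ)) ∧ walkSum (n + 1) ε (n + 1) = a) ↔
      ((∀ k ≤ n, |walkSum n (fun i => ε i.castSucc) k| ≤ (hb : ℤ)) ∧
        walkSum n (fun i => ε i.castSucc) n = a - (if ε (Fin.last n) then 1 else -1))
    constructor
    · rintro ⟨h1, h2⟩
      refine ⟨fun k hk => ?_, ?_⟩
      · rw [← walkSum_castSucc n ε hk]; exact h1 k (by omega)
      · have hsl := walkSum_snoc_last n ε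
        rw [h2] at hsl
        linarith [hsl]
    · rintro ⟨h1, h2⟩
      have hlast : walkSum (n + 1) ε (n + 1) = a := by
        rw [walkSum_snoc_last n ε]
        linarith [h2]
      refine ⟨fun k hk => ?_, hlast⟩
      rcases Nat.lt_or_ge k (n + 1) with h | h
      · rw [walkSum_castSucc n ε (by omega)]
        exact h1 k (by omega)
      · have hk1 : k = n + 1 := by omega
        rw [hk1, hlast]; exact ha
  rw [key, card_bool_split (fun bb ε => (∀ k ≤ n, |walkSum n ε k| ≤ (hb : ℤ))
    ∧ walkSum n ε n = a - (if bb then 1 else -1))]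
  have e1 : Nat.card {s : Fin n → Bool // (∀ k ≤ n, |walkSum n s k| ≤ (hb : ℤ))
      ∧ walkSum n s n = a - if true = true then 1 else -1} = Wc hb n (a - 1) := by
    apply Nat.card_congr
    apply Equiv.subtypeEquivRight
    intro ε; simp
  have e2 : Nat.card {s : Fin n → Bool // (∀ k ≤ n, |walkSum n s k| ≤ (hb : ℤ))
      ∧ walkSum n s n = a - if false = true then 1 else -1} = Wc hb n (a + 1) := by
    apply Nat.card_congr
    apply Equiv.subtypeEquivRight
    intro ε; simp [sub_neg_eq_add]
  rw [e1, e2]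

lemma walkSum_neg (n : ℕ) (ε : Fin n → Bool) (k : ℕ) :
    walkSum n (fun i => !(ε i)) k = -walkSum n ε k := by
  unfold walkSum
  rw [← Finset.sum_neg_distrib]
  refine Finset.sum_congr rfl fun i _ => ?_
  by_cases h : (i : ℕ) < k
  · cases hε : ε i <;> simp [h, hε]
  · simp [h]

lemma Wc_symm (hb n : ℕ) (a : ℤ) : Wc hb n (-a) = Wc hb n a := by
  apply Nat.card_congr
  refine Equiv.subtypeEquiv ⟨fun ε i => !(ε i), fun ε i => !(ε i),
    fun ε => by funext i; simp, fun ε => by funext i; simp⟩ (fun ε => ?_)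
  simp only [Equiv.coe_fn_mk]
  constructor
  · rintro ⟨h1, h2⟩
    exact ⟨fun k hk => by rw [walkSum_neg, abs_neg]; exact h1 k hk,
      by rw [walkSum_neg, h2]; exact neg_neg a⟩
  · rintro ⟨h1, h2⟩
    constructor
    · intro k hk
      have := h1 k hk
      rw [walkSum_neg, abs_neg] at this
      exact this
    · have := h2
      rw [walkSum_neg, neg_eq_iff_eq_neg] at this
      rw [this]

lemma Wc_base (hb : ℕ) (a : ℤ) :
    Wc hb 0 a = if a = 0 then 1 else 0 := by
  have hws : ∀ (ε : Fin 0 → Bool) (k : ℕ), walkSum 0 ε k = 0 := by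
    intro ε k
    simp [walkSum]
  by_cases h : a = 0
  · subst h
    rw [if_pos rfl]
    have : Unique {ε : Fin 0 → Bool //
        (∀ k ≤ 0, |walkSum 0 ε k| ≤ (hb : ℤ)) ∧ walkSum 0 ε 0 = 0} := by
      refine ⟨⟨⟨fun i => i.elim0, fun k _ => by simp [hws], hws _ 0⟩⟩, ?_⟩
      rintro ⟨ε, hε⟩
      ext i
      exact i.elim0
    exact Nat.card_unique
  · rw [if_neg h]
    have : IsEmpty {ε : Fin 0 → Bool //
        (∀ k ≤ 0, |walkSum 0 ε k| ≤ (hb : ℤ)) ∧ walkSum 0 ε 0 = a} := by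
      constructor
      rintro ⟨ε, h1, h2⟩
      rw [hws] at h2
      exact h (h2.symm)
    exact Nat.card_of_isEmpty

/-- Main identity: the path count equals the reflection formula. -/
lemma Wc_eq_fref (hb : ℕ) : ∀ (n : ℕ) (a : ℤ), |a| ≤ (hb : ℤ) →
    (Wc hb n a : ℤ) = fref hb n a := by
  intro n
  induction n with
  | zero =>
    intro a ha
    rw [Wc_base, fref_zero hb a ha]
    split <;> simp
  | succ n ih =>
    intro a ha
    have ha1 : -(hb : ℤ) ≤ a := (abs_le.mp ha).1
    have ha2 : a ≤ (hb : ℤ) := (abs_le.mp ha).2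
    rw [Wc_succ hb n a ha, fref_pascal hb n a ha]
    push_cast
    have e1 : (Wc hb n (a - 1) : ℤ) = fref hb n (a - 1) := by
      by_cases h : |a - 1| ≤ (hb : ℤ)
      · exact ih (a - 1) h
      · have haeq : a - 1 = -((hb : ℤ) + 1) := by
          rcases abs_le.mpr ⟨ha1, ha2⟩ with _
          rw [abs_le] at h
          push_neg at h
          rcases le_or_gt (-(hb : ℤ)) (a - 1) with h' | h'
          · have := h h'; omega
          · omega
        rw [Wc_out hb n (a - 1) (by rw [haeq, abs_neg, abs_of_nonneg (by positivity)]; linarith),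
          haeq, fref_boundary_neg]
        simp
    have e2 : (Wc hb n (a + 1) : ℤ) = fref hb n (a + 1) := by
      by_cases h : |a + 1| ≤ (hb : ℤ)
      · exact ih (a + 1) h
      · have haeq : a + 1 = (hb : ℤ) + 1 := by
          rw [abs_le] at h
          push_neg at h
          rcases le_or_gt (-(hb : ℤ)) (a + 1) with h' | h'
          · have := h h'; omega
          · omega
        rw [Wc_out hb n (a + 1) (by rw [haeq, abs_of_nonneg (by positivity)]; linarith),
          haeq, fref_boundary_pos]
        simp
    rw [e1, e2]

lemma Wc_height_zero (n : ℕ) (hn : 1 ≤ n) (a : ℤ) : Wc 0 n a = 0 := by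
  have : IsEmpty {ε : Fin n → Bool //
      (∀ k ≤ n, |walkSum n ε k| ≤ ((0 : ℕ) : ℤ)) ∧ walkSum n ε n = a} := by
    constructor
    rintro ⟨ε, h1, h2⟩
    have h01 : (0 : ℕ) < n := hn
    have hw : walkSum n ε 1 = walkSum n ε 0 + (if ε ⟨0, h01⟩ then 1 else -1) :=
      walkSum_succ_of_lt h01 ε
    rw [walkSum_zero', zero_add] at hw
    have := h1 1 hn
    rw [hw] at this
    cases hb : ε ⟨0, h01⟩ <;> rw [hb] at this <;> simp at this
  exact Nat.card_of_isEmpty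

lemma card_and_or {σ : Type*} [Finite σ] (C A B : σ → Prop)
    (hd : ∀ s, A s → B s → False) :
    Nat.card {s : σ // C s ∧ (A s ∨ B s)}
      = Nat.card {s : σ // C s ∧ A s} + Nat.card {s : σ // C s ∧ B s} := by
  classical
  rw [← Nat.card_sum]
  apply Nat.card_congr
  exact {
    toFun := fun x => if h : A x.1 then Sum.inl ⟨x.1, x.2.1, h⟩
      else Sum.inr ⟨x.1, x.2.1, (x.2.2).resolve_left h⟩
    invFun := fun x => match x with
      | Sum.inl ⟨s, hs⟩ => ⟨s, hs.1, Or.inl hs.2⟩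
      | Sum.inr ⟨s, hs⟩ => ⟨s, hs.1, Or.inr hs.2⟩
    left_inv := fun x => by
      by_cases h : A x.1
      · simp only [dif_pos h]
      · simp only [dif_neg h]
    right_inv := fun x => by
      rcases x with ⟨s, hs⟩ | ⟨s, hs⟩
      · simp only [dif_pos hs.2]
      · simp only [dif_neg (fun h => hd s h hs.2)] }

lemma V_eq_Wc (n hb : ℕ) (hn : 1 ≤ n) :
    V n hb = Wc hb n (hb : ℤ) + Wc hb n (-(hb : ℤ)) := by
  rcases Nat.eq_zero_or_pos hb with rfl | hb1
  · rw [Wc_height_zero n hn, Wc_height_zero n hn]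
    have : V n 0 = Wc 0 n 0 := by
      apply Nat.card_congr
      apply Equiv.subtypeEquivRight
      intro ε
      rw [Nat.cast_zero, abs_eq_zero]
    rw [this, Wc_height_zero n hn]
  · have habs : ∀ ε : Fin n → Bool, |walkSum n ε n| = (hb : ℤ)
        ↔ (walkSum n ε n = (hb : ℤ) ∨ walkSum n ε n = -(hb : ℤ)) := by
      intro ε
      exact abs_eq (by positivity)
    have : V n hb = Nat.card {ε : Fin n → Bool //
        (∀ k ≤ n, |walkSum n ε k| ≤ (hb : ℤ))
          ∧ (walkSum n ε n = (hb : ℤ) ∨ walkSum n ε n = -(hb : ℤ))} := by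
      apply Nat.card_congr
      apply Equiv.subtypeEquivRight
      intro ε
      rw [habs ε]
    rw [this]
    exact card_and_or _ _ _ (fun ε hA hB => by
      rw [hA] at hB
      have : (hb : ℤ) = 0 := by omega
      omega)

/-- The first-passage block. -/
def gterm (hb n k : ℕ) : ℤ :=
  b n (((hb : ℤ) + 1) * (2 * k + 1) - 1) - b n (((hb : ℤ) + 1) * (2 * k + 1) + 1)

lemma gterm_zero (hb n k : ℕ) (hk : n < 2 * k) : gterm hb n k = 0 := by
  have hh0 : (0 : ℤ) ≤ (hb : ℤ) := Nat.cast_nonneg hb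
  have hk' : (n : ℤ) < 2 * k := by exact_mod_cast hk
  have hk0 : (0 : ℤ) ≤ (k : ℤ) := Nat.cast_nonneg k
  unfold gterm
  rw [b_zero, b_zero, sub_self]
  · rw [abs_of_nonneg (by nlinarith [mul_nonneg hh0 hk0])]
    nlinarith [mul_nonneg hh0 hk0]
  · rw [abs_of_nonneg (by nlinarith [mul_nonneg hh0 hk0])]
    nlinarith [mul_nonneg hh0 hk0]

lemma sum_even_odd (u : ℕ → ℤ) (N : ℕ) :
    ∑ k ∈ Finset.range (2 * N + 1), u k
      = ∑ j ∈ Finset.range (N + 1), u (2 * j) + ∑ l ∈ Finset.range N, u (2 * l + 1) := by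
  induction N with
  | zero => simp
  | succ N ih =>
    have e : 2 * (N + 1) + 1 = (2 * N + 1) + 1 + 1 := by ring
    rw [e, Finset.sum_range_succ, Finset.sum_range_succ, ih,
      Finset.sum_range_succ (fun j => u (2 * j)) (N + 1),
      Finset.sum_range_succ (fun l => u (2 * l + 1)) N]
    have e1 : 2 * N + 1 + 1 = 2 * (N + 1) := by ring
    rw [e1]
    ring

lemma fref_eq_gsum (hb n : ℕ) :
    fref hb n (hb : ℤ) = ∑ k ∈ Finset.range (n + 1), (-1 : ℤ) ^ k * gterm hb n k := by
  have hsplit : fref hb n (hb : ℤ)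
      = ∑ i ∈ Finset.range n,
          (b n ((hb : ℤ) + 4 * ((hb : ℤ) + 1) * ((i : ℤ) - n)) -
            b n (2 * ((hb : ℤ) + 1) - (hb : ℤ) + 4 * ((hb : ℤ) + 1) * ((i : ℤ) - n)))
        + ∑ i ∈ Finset.range (n + 1),
          (b n ((hb : ℤ) + 4 * ((hb : ℤ) + 1) * (((n + i : ℕ) : ℤ) - n)) -
            b n (2 * ((hb : ℤ) + 1) - (hb : ℤ) + 4 * ((hb : ℤ) + 1) * (((n + i : ℕ) : ℤ) - n))) := by
    unfold fref
    rw [show 2 * n + 1 = n + (n + 1) by ring, Finset.sum_range_add]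
  have h2 : ∀ i ∈ Finset.range (n + 1),
      (b n ((hb : ℤ) + 4 * ((hb : ℤ) + 1) * (((n + i : ℕ) : ℤ) - n)) -
        b n (2 * ((hb : ℤ) + 1) - (hb : ℤ) + 4 * ((hb : ℤ) + 1) * (((n + i : ℕ) : ℤ) - n)))
      = gterm hb n (2 * i) := by
    intro i _
    unfold gterm
    have e1 : (hb : ℤ) + 4 * ((hb : ℤ) + 1) * (((n + i : ℕ) : ℤ) - n)
        = ((hb : ℤ) + 1) * (2 * (2 * i : ℕ) + 1) - 1 := by push_cast; ring
    have e2 : 2 * ((hb : ℤ) + 1) - (hb : ℤ) + 4 * ((hb : ℤ) + 1) * (((n + i : ℕ) : ℤ) - n)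
        = ((hb : ℤ) + 1) * (2 * (2 * i : ℕ) + 1) + 1 := by push_cast; ring
    rw [e1, e2]
  have h3 : ∀ i ∈ Finset.range n,
      (b n ((hb : ℤ) + 4 * ((hb : ℤ) + 1) * ((i : ℤ) - n)) -
        b n (2 * ((hb : ℤ) + 1) - (hb : ℤ) + 4 * ((hb : ℤ) + 1) * ((i : ℤ) - n)))
      = -gterm hb n (2 * (n - 1 - i) + 1) := by
    intro i hi
    have hi' : i < n := Finset.mem_range.mp hi
    have hc : ((n - 1 - i : ℕ) : ℤ) = (n : ℤ) - 1 - i := by omega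
    unfold gterm
    have e1 : (hb : ℤ) + 4 * ((hb : ℤ) + 1) * ((i : ℤ) - n)
        = -(((hb : ℤ) + 1) * (2 * (2 * (n - 1 - i) + 1 : ℕ) + 1) + 1) := by push_cast [hc]; ring
    have e2 : 2 * ((hb : ℤ) + 1) - (hb : ℤ) + 4 * ((hb : ℤ) + 1) * ((i : ℤ) - n)
        = -(((hb : ℤ) + 1) * (2 * (2 * (n - 1 - i) + 1 : ℕ) + 1) - 1) := by push_cast [hc]; ring
    rw [e1, e2, b_symm, b_symm]
    ring
  rw [hsplit, Finset.sum_congr rfl h2, Finset.sum_congr rfl h3]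
  have hrefl := Finset.sum_range_reflect (fun l => -gterm hb n (2 * l + 1)) n
  rw [hrefl]
  have hext : ∑ k ∈ Finset.range (n + 1), (-1 : ℤ) ^ k * gterm hb n k
      = ∑ k ∈ Finset.range (2 * n + 1), (-1 : ℤ) ^ k * gterm hb n k := by
    apply Finset.sum_subset
    · apply Finset.range_subset_range.mpr; omega
    · intro k _ hk
      rw [Finset.mem_range, not_lt] at hk
      rw [gterm_zero hb n k (by omega), mul_zero]
  rw [hext, sum_even_odd (fun k => (-1 : ℤ) ^ k * gterm hb n k) n]
  have he : ∀ j, (-1 : ℤ) ^ (2 * j) * gterm hb n (2 * j) = gterm hb n (2 * j) := by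
    intro j; rw [pow_mul]; norm_num
  have ho : ∀ l, (-1 : ℤ) ^ (2 * l + 1) * gterm hb n (2 * l + 1) = -gterm hb n (2 * l + 1) := by
    intro l; rw [pow_succ, pow_mul]; norm_num
  simp only [he, ho]
  ring

lemma key_id (n κ : ℕ) (hκ : 2 * κ ≤ n) :
    ((n : ℤ) + 1 - 2 * κ) * (((n + 1).choose κ : ℕ) : ℤ)
      = ((n : ℤ) + 1) * (b n ((n : ℤ) - 2 * κ) - b n ((n : ℤ) - 2 * κ + 2)) := by
  rcases Nat.eq_zero_or_pos κ with rfl | hκ0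
  · have h1 : b n ((n : ℤ) - 2 * (0 : ℕ)) = ((n.choose 0 : ℕ) : ℤ) := b_closed n 0 (Nat.zero_le n)
    have h2 : b n ((n : ℤ) - 2 * (0 : ℕ) + 2) = 0 := by
      apply b_zero
      rw [abs_of_nonneg (by push_cast; linarith [Nat.cast_nonneg (α := ℤ) n])]
      push_cast; linarith
    rw [h1, h2]
    simp
  · obtain ⟨j, rfl⟩ : ∃ j, κ = j + 1 := ⟨κ - 1, by omega⟩
    have hjn : j + 1 ≤ n := by omega
    have h1 : b n ((n : ℤ) - 2 * (j + 1 : ℕ)) = ((n.choose (j + 1) : ℕ) : ℤ) :=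
      b_closed n (j + 1) hjn
    have h2 : b n ((n : ℤ) - 2 * (j + 1 : ℕ) + 2) = ((n.choose j : ℕ) : ℤ) := by
      have e : (n : ℤ) - 2 * (j + 1 : ℕ) + 2 = (n : ℤ) - 2 * (j : ℕ) := by push_cast; ring
      rw [e]
      exact b_closed n j (by omega)
    rw [h1, h2]
    have hc1 : ((n : ℤ) + 1) * ((n.choose j : ℕ) : ℤ)
        = (((n + 1).choose (j + 1) : ℕ) : ℤ) * ((j : ℤ) + 1) := by
      have := Nat.add_one_mul_choose_eq n j
      exact_mod_cast congrArg (fun t : ℕ => (t : ℤ)) this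
    have hc2 : (((n + 1).choose (j + 1) : ℕ) : ℤ) = ((n.choose j : ℕ) : ℤ) + ((n.choose (j + 1) : ℕ) : ℤ) := by
      have := Nat.choose_succ_succ n j
      exact_mod_cast congrArg (fun t : ℕ => (t : ℤ)) this
    push_cast at hc1 hc2 ⊢
    linear_combination ((n : ℤ) + 1) * hc2 + 2 * hc1

theorem V_explicit' (n h : ℕ) (hn : 1 ≤ n) (hpar : h % 2 = n % 2) :
    (V n h : ℚ) =
      2 * ∑ k ∈ Finset.range (n + 1),
        (if (h + 1) * (2 * k + 1) ≤ n + 1 then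
          (-1 : ℚ) ^ k * (((h : ℚ) + 1) * (2 * (k : ℚ) + 1) / ((n : ℚ) + 1)) *
            ((n + 1).choose ((n + 1 - (h + 1) * (2 * k + 1)) / 2) : ℚ)
        else 0) := by
  have hVZ : (V n h : ℤ) = 2 * ∑ k ∈ Finset.range (n + 1), (-1 : ℤ) ^ k * gterm h n k := by
    have h1 : V n h = Wc h n (h : ℤ) + Wc h n (-(h : ℤ)) := V_eq_Wc n h hn
    rw [Wc_symm h n (h : ℤ)] at h1
    have h2 : (V n h : ℤ) = 2 * (Wc h n (h : ℤ) : ℤ) := by rw [h1]; push_cast; ring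
    rw [h2, Wc_eq_fref h n (h : ℤ) (by rw [abs_of_nonneg (Nat.cast_nonneg h)]),
      fref_eq_gsum h n]
  have term_eq : ∀ k ∈ Finset.range (n + 1),
      (if (h + 1) * (2 * k + 1) ≤ n + 1 then
        (-1 : ℚ) ^ k * (((h : ℚ) + 1) * (2 * (k : ℚ) + 1) / ((n : ℚ) + 1)) *
          ((n + 1).choose ((n + 1 - (h + 1) * (2 * k + 1)) / 2) : ℚ)
      else 0) = (((-1 : ℤ) ^ k * gterm h n k : ℤ) : ℚ) := by
    intro k _
    set m : ℕ := (h + 1) * (2 * k + 1) with hm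
    have hm1 : 1 ≤ m := by rw [hm]; exact Nat.mul_pos (by omega) (by omega)
    have hmpar : m % 2 = (n + 1) % 2 := by
      have em : m = 2 * ((h + 1) * k) + h + 1 := by rw [hm]; ring
      omega
    have hmz : ((h : ℤ) + 1) * (2 * (k : ℤ) + 1) = (m : ℤ) := by rw [hm]; push_cast; ring
    by_cases hle : m ≤ n + 1
    · rw [if_pos hle]
      set κ : ℕ := (n + 1 - m) / 2 with hκ
      have hκ2 : 2 * κ = n + 1 - m := by omega
      have hκn : 2 * κ ≤ n := by omega
      have hkey := key_id n κ hκn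
      have e1 : (n : ℤ) + 1 - 2 * κ = (m : ℤ) := by omega
      have e2 : (n : ℤ) - 2 * κ = (m : ℤ) - 1 := by omega
      have e3 : (n : ℤ) - 2 * κ + 2 = (m : ℤ) + 1 := by omega
      rw [e1, e3, e2] at hkey
      have hgt : gterm h n k = b n ((m : ℤ) - 1) - b n ((m : ℤ) + 1) := by
        unfold gterm
        rw [hmz]
      have hn1 : ((n : ℚ) + 1) ≠ 0 := by positivity
      rw [hgt]
      have hkeyQ : (m : ℚ) * (((n + 1).choose κ : ℕ) : ℚ)
          = ((n : ℚ) + 1) * ((b n ((m : ℤ) - 1) - b n ((m : ℤ) + 1) : ℤ) : ℚ) := by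
        exact_mod_cast congrArg (fun t : ℤ => (t : ℚ)) hkey
      have hmQ : ((h : ℚ) + 1) * (2 * (k : ℚ) + 1) = (m : ℚ) := by
        rw [hm]; push_cast; ring
      rw [hmQ]
      have hb' : ((b n ((m : ℤ) - 1) - b n ((m : ℤ) + 1) : ℤ) : ℚ)
          = (m : ℚ) * (((n + 1).choose κ : ℕ) : ℚ) / ((n : ℚ) + 1) := by
        rw [eq_div_iff hn1]
        push_cast at hkeyQ ⊢
        linarith [hkeyQ]
      push_cast [hb']
      ring
    · rw [if_neg hle]
      have hgt : gterm h n k = 0 := by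
        unfold gterm
        rw [hmz, b_zero, b_zero, sub_self]
        · rw [abs_of_nonneg (by push_cast; omega)]
          push_cast; omega
        · rw [abs_of_nonneg (by push_cast; omega)]
          push_cast; omega
      rw [hgt]
      push_cast
      ring
  rw [Finset.sum_congr rfl term_eq]
  rw [← Int.cast_sum]
  exact_mod_cast hVZ

/-- Explicit formula for `V(n,h)`: for `n ≥ 1` and `h ≡ n (mod 2)`,
`V(n,h) = 2 Σ_{k≥0, (h+1)(2k+1) ≤ n+1} (−1)^k ((h+1)(2k+1)/(n+1)) C(n+1, (n+1−(h+1)(2k+1))/2)`. -/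
theorem V_explicit (n h : ℕ) (hn : 1 ≤ n) (hpar : h % 2 = n % 2) :
    (V n h : ℚ) =
      2 * ∑ k ∈ Finset.range (n + 1),
        (if (h + 1) * (2 * k + 1) ≤ n + 1 then
          (-1 : ℚ) ^ k * (((h : ℚ) + 1) * (2 * (k : ℚ) + 1) / ((n : ℚ) + 1)) *
            ((n + 1).choose ((n + 1 - (h + 1) * (2 * k + 1)) / 2) : ℚ)
        else 0) := by
  exact V_explicit' n h hn hpar
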